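/- Consider the 6-dimensional spin representation Δ₆ ≅ ℂ⁸. The element a·(e₁·e₂·e₃·e₄ + e₁·e₂·e₅·e₆ + e₃·e₄·e₅·e₆ + 3), a > 0, acts on each half-spin module Δ₆^± as a symmetric endomorphism with eigenvalues (0, 4a, 4a, 4a). -/

import Mathlib

noncomputable section
open scoped BigOperators ComplexInnerProductSpace

namespace Stmt16Aux


def sgn (b : Bool) : ℂ := cond b 1 (-1)

lemma sgn_mul_self (b : Bool) : sgn b * sgn b = 1 := by cases b <;> simp [sgn]
lemma sgn_not (b : Bool) : sgn (!b) = - sgn b := by cases b <;> simp [sgn]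
lemma conj_sgn (b : Bool) : (starRingEnd ℂ) (sgn b) = sgn b := by cases b <;> simp [sgn]
lemma sgn_inj : Function.Injective sgn := by
  intro x y h
  cases x <;> cases y <;> first | rfl | (exfalso; simp [sgn] at h; norm_num at h)

def patt (tr : Bool) : Fin 4 → Bool × Bool × Bool :=
  ![(tr,tr,tr), (tr,!tr,!tr), (!tr,tr,!tr), (!tr,!tr,tr)]

lemma patt_inj (tr : Bool) : Function.Injective (patt tr) := by
  cases tr <;> decide

lemma nu_patt (tr : Bool) (m : Fin 4) :
    Complex.I * (sgn (patt tr m).1 * sgn (patt tr m).2.1 * sgn (patt tr m).2.2)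
      = Complex.I * sgn tr := by
  cases tr <;> fin_cases m <;> simp [patt, sgn] <;> try ring

lemma nu_not_mem (tr : Bool) (s : Bool × Bool × Bool) (h : s ∉ Set.range (patt tr)) :
    Complex.I * (sgn s.1 * sgn s.2.1 * sgn s.2.2) = -(Complex.I * sgn tr) := by
  cases tr <;> rcases s with ⟨b1, b2, b3⟩ <;> cases b1 <;> cases b2 <;> cases b3 <;>
    first
      | exact absurd ⟨0, by decide⟩ h
      | exact absurd ⟨1, by decide⟩ h
      | exact absurd ⟨2, by decide⟩ h
      | exact absurd ⟨3, by decide⟩ h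
      | (simp [sgn]; try ring)

lemma mu_patt (tr : Bool) (m : Fin 4) :
    (3 : ℂ) - sgn (patt tr m).1 * sgn (patt tr m).2.1
      - sgn (patt tr m).1 * sgn (patt tr m).2.2
      - sgn (patt tr m).2.1 * sgn (patt tr m).2.2
      = ![(0:ℂ), 4, 4, 4] m := by
  cases tr <;> fin_cases m <;> simp [patt, sgn] <;> try ring







lemma exists_eig {Δ : Type*} [AddCommGroup Δ] [Module ℂ Δ]
    (K0 K1 K2 : Δ →ₗ[ℂ] Δ)
    (h00 : ∀ ψ, K0 (K0 ψ) = ψ) (h11 : ∀ ψ, K1 (K1 ψ) = ψ) (h22 : ∀ ψ, K2 (K2 ψ) = ψ)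
    (h01 : ∀ ψ, K0 (K1 ψ) = K1 (K0 ψ)) (h02 : ∀ ψ, K0 (K2 ψ) = K2 (K0 ψ))
    (h12 : ∀ ψ, K1 (K2 ψ) = K2 (K1 ψ))
    (g0 g1 g2 : Δ →ₗ[ℂ] Δ)
    (hg0 : ∀ ψ : Δ, ψ ≠ 0 → g0 ψ ≠ 0) (hg1 : ∀ ψ : Δ, ψ ≠ 0 → g1 ψ ≠ 0)
    (hg2 : ∀ ψ : Δ, ψ ≠ 0 → g2 ψ ≠ 0)
    (hg0a : ∀ ψ, K0 (g0 ψ) = - g0 (K0 ψ))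
    (hg0c1 : ∀ ψ, K1 (g0 ψ) = g0 (K1 ψ)) (hg0c2 : ∀ ψ, K2 (g0 ψ) = g0 (K2 ψ))
    (hg1a : ∀ ψ, K1 (g1 ψ) = - g1 (K1 ψ))
    (hg1c0 : ∀ ψ, K0 (g1 ψ) = g1 (K0 ψ)) (hg1c2 : ∀ ψ, K2 (g1 ψ) = g1 (K2 ψ))
    (hg2a : ∀ ψ, K2 (g2 ψ) = - g2 (K2 ψ))
    (hg2c0 : ∀ ψ, K0 (g2 ψ) = g2 (K0 ψ)) (hg2c1 : ∀ ψ, K1 (g2 ψ) = g2 (K1 ψ))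
    (hex : ∃ ψ : Δ, ψ ≠ 0) :
    ∀ s : Bool × Bool × Bool, ∃ φ : Δ, φ ≠ 0 ∧
      K0 φ = sgn s.1 • φ ∧ K1 φ = sgn s.2.1 • φ ∧ K2 φ = sgn s.2.2 • φ := by
  have split : ∀ (L : Δ →ₗ[ℂ] Δ), (∀ ψ, L (L ψ) = ψ) → ∀ ψ : Δ, ψ ≠ 0 →
      ∃ b : Bool, ψ + sgn b • L ψ ≠ 0 ∧
        L (ψ + sgn b • L ψ) = sgn b • (ψ + sgn b • L ψ) := by
    intro L hL ψ hψ
    have hLb : ∀ b : Bool, L (ψ + sgn b • L ψ) = sgn b • (ψ + sgn b • L ψ) := by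
      intro b
      rw [map_add, map_smul, hL, smul_add, smul_smul, sgn_mul_self, one_smul, add_comm]
    by_cases h : ψ + sgn true • L ψ ≠ 0
    · exact ⟨true, h, hLb true⟩
    · refine ⟨false, fun h0 => hψ ?_, hLb false⟩
      push_neg at h
      have hsum : (ψ + sgn true • L ψ) + (ψ + sgn false • L ψ) = (2:ℂ) • ψ := by
        simp only [sgn, cond]
        module
      rw [h, h0, add_zero] at hsum
      have := hsum.symm
      rcases smul_eq_zero.mp this with h2 | h2
      · norm_num at h2
      · exact h2
  obtain ⟨ψ, hψ⟩ := hex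
  obtain ⟨b0, h1ne, h1eig⟩ := split K0 h00 ψ hψ
  set φ1 : Δ := ψ + sgn b0 • K0 ψ with hφ1
  obtain ⟨b1, h2ne, h2eig⟩ := split K1 h11 φ1 h1ne
  set φ2 : Δ := φ1 + sgn b1 • K1 φ1 with hφ2
  have h2eig0 : K0 φ2 = sgn b0 • φ2 := by
    rw [hφ2]
    simp only [map_add, map_smul, h01, h1eig]
    module
  obtain ⟨b2, h3ne, h3eig⟩ := split K2 h22 φ2 h2ne
  set φ3 : Δ := φ2 + sgn b2 • K2 φ2 with hφ3
  have h3eig0 : K0 φ3 = sgn b0 • φ3 := by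
    rw [hφ3]
    simp only [map_add, map_smul, h02, h2eig0]
    module
  have h3eig1 : K1 φ3 = sgn b1 • φ3 := by
    rw [hφ3]
    simp only [map_add, map_smul, h12, h2eig]
    module
  clear_value φ1 φ2 φ3
  -- transport
  have move0 : ∀ (s1 t1 t2 t3 : Bool) (φ : Δ), φ ≠ 0 →
      K0 φ = sgn t1 • φ → K1 φ = sgn t2 • φ → K2 φ = sgn t3 • φ →
      ∃ φ' : Δ, φ' ≠ 0 ∧ K0 φ' = sgn s1 • φ' ∧ K1 φ' = sgn t2 • φ' ∧ K2 φ' = sgn t3 • φ' := by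
    intro s1 t1 t2 t3 φ hφ e0 e1 e2
    by_cases h : s1 = t1
    · exact ⟨φ, hφ, h ▸ e0, e1, e2⟩
    · have hs : s1 = !t1 := by revert h; cases s1 <;> cases t1 <;> decide
      refine ⟨g0 φ, hg0 φ hφ, ?_, ?_, ?_⟩
      · rw [hg0a, e0, map_smul, hs, sgn_not]; module
      · rw [hg0c1, e1, map_smul]
      · rw [hg0c2, e2, map_smul]
  have move1 : ∀ (s2 t1 t2 t3 : Bool) (φ : Δ), φ ≠ 0 →
      K0 φ = sgn t1 • φ → K1 φ = sgn t2 • φ → K2 φ = sgn t3 • φ →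
      ∃ φ' : Δ, φ' ≠ 0 ∧ K0 φ' = sgn t1 • φ' ∧ K1 φ' = sgn s2 • φ' ∧ K2 φ' = sgn t3 • φ' := by
    intro s2 t1 t2 t3 φ hφ e0 e1 e2
    by_cases h : s2 = t2
    · exact ⟨φ, hφ, e0, h ▸ e1, e2⟩
    · have hs : s2 = !t2 := by revert h; cases s2 <;> cases t2 <;> decide
      refine ⟨g1 φ, hg1 φ hφ, ?_, ?_, ?_⟩
      · rw [hg1c0, e0, map_smul]
      · rw [hg1a, e1, map_smul, hs, sgn_not]; module
      · rw [hg1c2, e2, map_smul]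
  have move2 : ∀ (s3 t1 t2 t3 : Bool) (φ : Δ), φ ≠ 0 →
      K0 φ = sgn t1 • φ → K1 φ = sgn t2 • φ → K2 φ = sgn t3 • φ →
      ∃ φ' : Δ, φ' ≠ 0 ∧ K0 φ' = sgn t1 • φ' ∧ K1 φ' = sgn t2 • φ' ∧ K2 φ' = sgn s3 • φ' := by
    intro s3 t1 t2 t3 φ hφ e0 e1 e2
    by_cases h : s3 = t3
    · exact ⟨φ, hφ, e0, e1, h ▸ e2⟩
    · have hs : s3 = !t3 := by revert h; cases s3 <;> cases t3 <;> decide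
      refine ⟨g2 φ, hg2 φ hφ, ?_, ?_, ?_⟩
      · rw [hg2c0, e0, map_smul]
      · rw [hg2c1, e1, map_smul]
      · rw [hg2a, e2, map_smul, hs, sgn_not]; module
  rintro ⟨s1, s2, s3⟩
  obtain ⟨χ1, hχ1, e10, e11, e12⟩ := move0 s1 b0 b1 b2 φ3 h3ne h3eig0 h3eig1 h3eig
  obtain ⟨χ2, hχ2, e20, e21, e22⟩ := move1 s2 s1 b1 b2 χ1 hχ1 e10 e11 e12
  obtain ⟨χ3, hχ3, e30, e31, e32⟩ := move2 s3 s1 s2 b2 χ2 hχ2 e20 e21 e22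
  exact ⟨χ3, hχ3, e30, e31, e32⟩


end Stmt16Aux

open Stmt16Aux

/-- In the 6-dimensional spin representation `Δ₆ ≅ ℂ⁸`, the element
`a·(e₁·e₂·e₃·e₄ + e₁·e₂·e₅·e₆ + e₃·e₄·e₅·e₆ + 3)`, `a > 0`, acts on each half-spin
module `Δ₆^±` (the `±i`-eigenspaces of the volume element `e₁·e₂·e₃·e₄·e₅·e₆`) as a
symmetric endomorphism with eigenvalues `(0, 4a, 4a, 4a)`. -/
theorem stmt_16 {Δ : Type*} [NormedAddCommGroup Δ] [InnerProductSpace ℂ Δ]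
    [FiniteDimensional ℂ Δ]
    (hdim : Module.finrank ℂ Δ = 8)
    (c : Fin 6 → Δ →ₗ[ℂ] Δ)
    (hcl : ∀ i j ψ, c i (c j ψ) + c j (c i ψ) = if i = j then (-2 : ℂ) • ψ else 0)
    (hsk : ∀ i (ψ φ : Δ), ⟪c i ψ, φ⟫ = - ⟪ψ, c i φ⟫)
    (a : ℝ) (ha : 0 < a)
    (A : Δ → Δ)
    (hA : ∀ ψ, A ψ = ((a : ℝ) : ℂ) •
      (c 0 (c 1 (c 2 (c 3 ψ))) + c 0 (c 1 (c 4 (c 5 ψ))) + c 2 (c 3 (c 4 (c 5 ψ)))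
        + (3 : ℂ) • ψ))
    (V : Δ →ₗ[ℂ] Δ)
    (hV : V = c 0 ∘ₗ c 1 ∘ₗ c 2 ∘ₗ c 3 ∘ₗ c 4 ∘ₗ c 5) :
    (∀ ψ φ : Δ, ⟪A ψ, φ⟫ = ⟪ψ, A φ⟫)
    ∧ ∀ ε : ℂ, (ε = Complex.I ∨ ε = - Complex.I) →
        (∀ ψ ∈ Module.End.eigenspace V ε, A ψ ∈ Module.End.eigenspace V ε)
        ∧ ∃ b : OrthonormalBasis (Fin 4) ℂ (Module.End.eigenspace V ε),
            ∀ m, A (b m : Δ)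
              = (((![0, 4 * a, 4 * a, 4 * a] : Fin 4 → ℝ) m : ℝ) : ℂ) • (b m : Δ) := by
  classical
  -- Clifford basics
  have hsq : ∀ (j : Fin 6) (ψ : Δ), c j (c j ψ) = -ψ := by
    intro j ψ
    have h := hcl j j ψ
    rw [if_pos rfl] at h
    have h2 : (2:ℂ) • (c j (c j ψ)) = (2:ℂ) • (-ψ) := by
      rw [two_smul, h]; module
    exact smul_right_injective Δ two_ne_zero h2
  have hac : ∀ (j k : Fin 6), j ≠ k → ∀ ψ : Δ, c j (c k ψ) = - c k (c j ψ) := by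
    intro j k h ψ
    exact eq_neg_of_add_eq_zero_left (by rw [hcl j k ψ, if_neg h])
  have hswap : ∀ (i j k l : Fin 6), j ≠ k → j ≠ l → i ≠ k → i ≠ l → ∀ ψ : Δ,
      c i (c j (c k (c l ψ))) = c k (c l (c i (c j ψ))) := by
    intro i j k l hjk hjl hik hil ψ
    simp only [hac j k hjk, hac j l hjl, hac i k hik, hac i l hil, map_neg, neg_neg]
  have hswap3 : ∀ (i k l : Fin 6), k ≠ i → l ≠ i → ∀ ψ : Δ,
      c k (c l (c i ψ)) = c i (c k (c l ψ)) := by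
    intro i k l hki hli ψ
    simp only [hac l i hli, hac k i hki, map_neg, neg_neg]
  have hpair : ∀ (i j : Fin 6), i ≠ j → ∀ ψ : Δ, c i (c j (c i (c j ψ))) = -ψ := by
    intro i j h ψ
    rw [hac i j h (c i (c j ψ))]
    simp only [hsq, map_neg, neg_neg]
  have hcne : ∀ (j : Fin 6) (ψ : Δ), ψ ≠ 0 → c j ψ ≠ 0 := by
    intro j ψ h h0
    apply h
    have h1 := hsq j ψ
    rw [h0, map_zero] at h1
    simpa using h1.symm
  -- the three commuting symmetric involutions
  set K0 : Δ →ₗ[ℂ] Δ := Complex.I • (c 0 ∘ₗ c 1) with hK0def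
  set K1 : Δ →ₗ[ℂ] Δ := Complex.I • (c 2 ∘ₗ c 3) with hK1def
  set K2 : Δ →ₗ[ℂ] Δ := Complex.I • (c 4 ∘ₗ c 5) with hK2def
  have hK0 : ∀ ψ, K0 ψ = Complex.I • c 0 (c 1 ψ) := fun ψ => rfl
  have hK1 : ∀ ψ, K1 ψ = Complex.I • c 2 (c 3 ψ) := fun ψ => rfl
  have hK2 : ∀ ψ, K2 ψ = Complex.I • c 4 (c 5 ψ) := fun ψ => rfl
  have h00 : ∀ ψ, K0 (K0 ψ) = ψ := by
    intro ψ
    simp only [hK0, map_smul, smul_smul, Complex.I_mul_I, hpair 0 1 (by decide)]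
    module
  have h11 : ∀ ψ, K1 (K1 ψ) = ψ := by
    intro ψ
    simp only [hK1, map_smul, smul_smul, Complex.I_mul_I, hpair 2 3 (by decide)]
    module
  have h22 : ∀ ψ, K2 (K2 ψ) = ψ := by
    intro ψ
    simp only [hK2, map_smul, smul_smul, Complex.I_mul_I, hpair 4 5 (by decide)]
    module
  have h01 : ∀ ψ, K0 (K1 ψ) = K1 (K0 ψ) := by
    intro ψ
    simp only [hK0, hK1, map_smul, smul_smul]
    rw [hswap 0 1 2 3 (by decide) (by decide) (by decide) (by decide) ψ]
  have h02 : ∀ ψ, K0 (K2 ψ) = K2 (K0 ψ) := by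
    intro ψ
    simp only [hK0, hK2, map_smul, smul_smul]
    rw [hswap 0 1 4 5 (by decide) (by decide) (by decide) (by decide) ψ]
  have h12 : ∀ ψ, K1 (K2 ψ) = K2 (K1 ψ) := by
    intro ψ
    simp only [hK1, hK2, map_smul, smul_smul]
    rw [hswap 2 3 4 5 (by decide) (by decide) (by decide) (by decide) ψ]
  -- symmetry of the K's
  have hsymP : ∀ (p q : Fin 6), p ≠ q → ∀ (ψ φ : Δ),
      ⟪Complex.I • c p (c q ψ), φ⟫ = ⟪ψ, Complex.I • c p (c q φ)⟫ := by
    intro p q hpq ψ φ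
    rw [inner_smul_left, Complex.conj_I, hsk p (c q ψ) φ, hsk q ψ (c p φ),
      hac q p (Ne.symm hpq) φ, inner_neg_right, inner_smul_right]
    ring
  have hs0 : ∀ ψ φ : Δ, ⟪K0 ψ, φ⟫ = ⟪ψ, K0 φ⟫ := fun ψ φ => by
    rw [hK0, hK0]; exact hsymP 0 1 (by decide) ψ φ
  have hs1 : ∀ ψ φ : Δ, ⟪K1 ψ, φ⟫ = ⟪ψ, K1 φ⟫ := fun ψ φ => by
    rw [hK1, hK1]; exact hsymP 2 3 (by decide) ψ φ
  have hs2 : ∀ ψ φ : Δ, ⟪K2 ψ, φ⟫ = ⟪ψ, K2 φ⟫ := fun ψ φ => by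
    rw [hK2, hK2]; exact hsymP 4 5 (by decide) ψ φ
  -- intertwining with c 0, c 2, c 4
  have hg0a : ∀ ψ, K0 (c 0 ψ) = - c 0 (K0 ψ) := by
    intro ψ
    rw [hK0, hK0, hac 1 0 (by decide) ψ]
    simp only [map_neg, map_smul, smul_neg]
  have hg0c1 : ∀ ψ, K1 (c 0 ψ) = c 0 (K1 ψ) := by
    intro ψ
    rw [hK1, hK1, hswap3 0 2 3 (by decide) (by decide) ψ, map_smul]
  have hg0c2 : ∀ ψ, K2 (c 0 ψ) = c 0 (K2 ψ) := by
    intro ψ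
    rw [hK2, hK2, hswap3 0 4 5 (by decide) (by decide) ψ, map_smul]
  have hg1a : ∀ ψ, K1 (c 2 ψ) = - c 2 (K1 ψ) := by
    intro ψ
    rw [hK1, hK1, hac 3 2 (by decide) ψ]
    simp only [map_neg, map_smul, smul_neg]
  have hg1c0 : ∀ ψ, K0 (c 2 ψ) = c 2 (K0 ψ) := by
    intro ψ
    rw [hK0, hK0, hswap3 2 0 1 (by decide) (by decide) ψ, map_smul]
  have hg1c2 : ∀ ψ, K2 (c 2 ψ) = c 2 (K2 ψ) := by
    intro ψ
    rw [hK2, hK2, hswap3 2 4 5 (by decide) (by decide) ψ, map_smul]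
  have hg2a : ∀ ψ, K2 (c 4 ψ) = - c 4 (K2 ψ) := by
    intro ψ
    rw [hK2, hK2, hac 5 4 (by decide) ψ]
    simp only [map_neg, map_smul, smul_neg]
  have hg2c0 : ∀ ψ, K0 (c 4 ψ) = c 4 (K0 ψ) := by
    intro ψ
    rw [hK0, hK0, hswap3 4 0 1 (by decide) (by decide) ψ, map_smul]
  have hg2c1 : ∀ ψ, K1 (c 4 ψ) = c 4 (K1 ψ) := by
    intro ψ
    rw [hK1, hK1, hswap3 4 2 3 (by decide) (by decide) ψ, map_smul]
  -- a nonzero vector exists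
  have hex : ∃ ψ : Δ, ψ ≠ 0 := by
    have h8 : 0 < Module.finrank ℂ Δ := by rw [hdim]; norm_num
    have : Nontrivial Δ := Module.nontrivial_of_finrank_pos h8
    exact exists_ne 0
  -- joint eigenvectors in all 8 sectors
  have hjoint := exists_eig K0 K1 K2 h00 h11 h22 h01 h02 h12 (c 0) (c 2) (c 4)
    (hcne 0) (hcne 2) (hcne 4) hg0a hg0c1 hg0c2 hg1a hg1c0 hg1c2 hg2a hg2c0 hg2c1 hex
  choose φv hφne hφ0 hφ1 hφ2 using hjoint
  -- normalize
  obtain ⟨u, hunorm, huK0, huK1, huK2⟩ :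
      ∃ u : Bool × Bool × Bool → Δ, (∀ s, ‖u s‖ = 1)
        ∧ (∀ s, K0 (u s) = sgn s.1 • u s) ∧ (∀ s, K1 (u s) = sgn s.2.1 • u s)
        ∧ (∀ s, K2 (u s) = sgn s.2.2 • u s) := by
    refine ⟨fun s => ((‖φv s‖ : ℂ))⁻¹ • φv s,
      fun s => norm_smul_inv_norm (𝕜 := ℂ) (hφne s), ?_, ?_, ?_⟩
    · intro s; rw [map_smul, hφ0 s, smul_comm]
    · intro s; rw [map_smul, hφ1 s, smul_comm]
    · intro s; rw [map_smul, hφ2 s, smul_comm]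
  have hune : ∀ s, u s ≠ 0 := by
    intro s h
    have := hunorm s
    rw [h, norm_zero] at this
    norm_num at this
  -- orthogonality
  have hortho : ∀ s t, s ≠ t → ⟪u s, u t⟫ = 0 := by
    have key : ∀ (L : Δ →ₗ[ℂ] Δ) (s t : Bool × Bool × Bool) (bs bt : Bool),
        (∀ ψ φ : Δ, ⟪L ψ, φ⟫ = ⟪ψ, L φ⟫) →
        L (u s) = sgn bs • u s → L (u t) = sgn bt • u t → bs ≠ bt → ⟪u s, u t⟫ = 0 := by
      intro L s t bs bt hsym hes het hne
      have h1 : sgn bs * ⟪u s, u t⟫ = sgn bt * ⟪u s, u t⟫ := by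
        calc sgn bs * ⟪u s, u t⟫ = (starRingEnd ℂ) (sgn bs) * ⟪u s, u t⟫ := by rw [conj_sgn]
          _ = ⟪sgn bs • u s, u t⟫ := (inner_smul_left _ _ _).symm
          _ = ⟪L (u s), u t⟫ := by rw [hes]
          _ = ⟪u s, L (u t)⟫ := hsym _ _
          _ = ⟪u s, sgn bt • u t⟫ := by rw [het]
          _ = sgn bt * ⟪u s, u t⟫ := inner_smul_right _ _ _
      by_contra h
      exact hne (sgn_inj (mul_right_cancel₀ h h1))
    rintro ⟨s1, s2, s3⟩ ⟨t1, t2, t3⟩ hst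
    by_cases h1 : s1 = t1
    · by_cases h2 : s2 = t2
      · have h3 : s3 ≠ t3 := fun h3 => hst (by rw [h1, h2, h3])
        exact key K2 _ _ s3 t3 hs2 (huK2 _) (huK2 _) h3
      · exact key K1 _ _ s2 t2 hs1 (huK1 _) (huK1 _) h2
    · exact key K0 _ _ s1 t1 hs0 (huK0 _) (huK0 _) h1
  have hon : Orthonormal ℂ u := ⟨hunorm, fun {s t} hst => hortho s t hst⟩
  -- basis
  have hcard : Fintype.card (Bool × Bool × Bool) = Module.finrank ℂ Δ := by
    simp [hdim]
  let B : Module.Basis (Bool × Bool × Bool) ℂ Δ :=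
    basisOfLinearIndependentOfCardEqFinrank hon.linearIndependent hcard
  have hB : ∀ s, B s = u s := fun s => by
    rw [show B = basisOfLinearIndependentOfCardEqFinrank hon.linearIndependent hcard from rfl,
      coe_basisOfLinearIndependentOfCardEqFinrank]
  -- pair actions on the u's
  have e01 : ∀ s, c 0 (c 1 (u s)) = (-Complex.I * sgn s.1) • u s := by
    intro s
    have h := huK0 s
    rw [hK0] at h
    have h2 := congrArg (fun x : Δ => (-Complex.I : ℂ) • x) h
    simp only [smul_smul] at h2
    rw [neg_mul, Complex.I_mul_I, neg_neg, one_smul] at h2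
    exact h2
  have e23 : ∀ s, c 2 (c 3 (u s)) = (-Complex.I * sgn s.2.1) • u s := by
    intro s
    have h := huK1 s
    rw [hK1] at h
    have h2 := congrArg (fun x : Δ => (-Complex.I : ℂ) • x) h
    simp only [smul_smul] at h2
    rw [neg_mul, Complex.I_mul_I, neg_neg, one_smul] at h2
    exact h2
  have e45 : ∀ s, c 4 (c 5 (u s)) = (-Complex.I * sgn s.2.2) • u s := by
    intro s
    have h := huK2 s
    rw [hK2] at h
    have h2 := congrArg (fun x : Δ => (-Complex.I : ℂ) • x) h
    simp only [smul_smul] at h2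
    rw [neg_mul, Complex.I_mul_I, neg_neg, one_smul] at h2
    exact h2
  -- action of V on the u's
  have hVu : ∀ s, V (u s) = (Complex.I * (sgn s.1 * sgn s.2.1 * sgn s.2.2)) • u s := by
    intro s
    have e2 : c 2 (c 3 (c 4 (c 5 (u s)))) =
        ((-Complex.I * sgn s.2.1) * (-Complex.I * sgn s.2.2)) • u s := by
      rw [e45 s, map_smul, map_smul, e23 s, smul_smul, mul_comm]
    have e3 : c 0 (c 1 (c 2 (c 3 (c 4 (c 5 (u s)))))) =
        ((-Complex.I * sgn s.1) * ((-Complex.I * sgn s.2.1) * (-Complex.I * sgn s.2.2))) • u s := by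
      rw [e2, map_smul, map_smul, e01 s, smul_smul, mul_comm]
    rw [hV]
    simp only [LinearMap.comp_apply]
    rw [e3]
    congr 1
    linear_combination (-Complex.I * sgn s.1 * sgn s.2.1 * sgn s.2.2) * Complex.I_sq
  -- action of A on the u's
  have hAu : ∀ s, A (u s) = ((a:ℂ) * ((3:ℂ) - sgn s.1 * sgn s.2.1 - sgn s.1 * sgn s.2.2
      - sgn s.2.1 * sgn s.2.2)) • u s := by
    intro s
    have t1 : c 0 (c 1 (c 2 (c 3 (u s)))) =
        ((-Complex.I * sgn s.2.1) * (-Complex.I * sgn s.1)) • u s := by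
      rw [e23 s, map_smul, map_smul, e01 s, smul_smul]
    have t2 : c 0 (c 1 (c 4 (c 5 (u s)))) =
        ((-Complex.I * sgn s.2.2) * (-Complex.I * sgn s.1)) • u s := by
      rw [e45 s, map_smul, map_smul, e01 s, smul_smul]
    have t3 : c 2 (c 3 (c 4 (c 5 (u s)))) =
        ((-Complex.I * sgn s.2.2) * (-Complex.I * sgn s.2.1)) • u s := by
      rw [e45 s, map_smul, map_smul, e23 s, smul_smul]
    rw [hA, t1, t2, t3]
    match_scalars
    linear_combination ((a:ℂ) * (sgn s.1 * sgn s.2.1 + sgn s.1 * sgn s.2.2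
      + sgn s.2.1 * sgn s.2.2)) * Complex.I_sq
  -- the symmetric reformulation of A
  have hA2 : ∀ ψ, A ψ = ((a:ℝ):ℂ) • ((3:ℂ) • ψ - K0 (K1 ψ) - K0 (K2 ψ) - K1 (K2 ψ)) := by
    intro ψ
    have q1 : K0 (K1 ψ) = - c 0 (c 1 (c 2 (c 3 ψ))) := by
      simp only [hK0, hK1, map_smul, smul_smul, Complex.I_mul_I, neg_smul, one_smul]
    have q2 : K0 (K2 ψ) = - c 0 (c 1 (c 4 (c 5 ψ))) := by
      simp only [hK0, hK2, map_smul, smul_smul, Complex.I_mul_I, neg_smul, one_smul]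
    have q3 : K1 (K2 ψ) = - c 2 (c 3 (c 4 (c 5 ψ))) := by
      simp only [hK1, hK2, map_smul, smul_smul, Complex.I_mul_I, neg_smul, one_smul]
    rw [hA, q1, q2, q3]
    module
  have sym01 : ∀ ψ φ : Δ, ⟪K0 (K1 ψ), φ⟫ = ⟪ψ, K0 (K1 φ)⟫ := by
    intro ψ φ
    rw [hs0, hs1, h01 φ]
  have sym02 : ∀ ψ φ : Δ, ⟪K0 (K2 ψ), φ⟫ = ⟪ψ, K0 (K2 φ)⟫ := by
    intro ψ φ
    rw [hs0, hs2, h02 φ]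
  have sym12 : ∀ ψ φ : Δ, ⟪K1 (K2 ψ), φ⟫ = ⟪ψ, K1 (K2 φ)⟫ := by
    intro ψ φ
    rw [hs1, hs2, h12 φ]
  have part1 : ∀ ψ φ : Δ, ⟪A ψ, φ⟫ = ⟪ψ, A φ⟫ := by
    intro ψ φ
    simp only [hA2, inner_sub_left, inner_sub_right, inner_smul_left, inner_smul_right,
      Complex.conj_ofReal, map_ofNat, sym01, sym02, sym12]
  -- the linear version of A
  set A' : Δ →ₗ[ℂ] Δ := ((a:ℝ):ℂ) • (c 0 ∘ₗ c 1 ∘ₗ c 2 ∘ₗ c 3 + c 0 ∘ₗ c 1 ∘ₗ c 4 ∘ₗ c 5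
    + c 2 ∘ₗ c 3 ∘ₗ c 4 ∘ₗ c 5 + (3:ℂ) • LinearMap.id) with hA'def
  have hAA' : ∀ ψ, A ψ = A' ψ := by
    intro ψ
    rw [hA, hA'def]
    simp only [LinearMap.smul_apply, LinearMap.add_apply, LinearMap.comp_apply,
      LinearMap.id_apply]
  refine ⟨part1, ?_⟩
  intro ε hε
  obtain ⟨tr, hεtr⟩ : ∃ tr : Bool, ε = Complex.I * sgn tr := by
    rcases hε with h | h
    · exact ⟨true, by rw [h]; simp [sgn]⟩
    · exact ⟨false, by rw [h]; simp [sgn]⟩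
  have hεne : ε ≠ 0 := by
    rw [hεtr]; cases tr <;> simp [sgn, Complex.I_ne_zero]
  -- commutation of V and A'
  have hVA : V ∘ₗ A' = A' ∘ₗ V := by
    apply Module.Basis.ext B
    intro s
    simp only [LinearMap.comp_apply, hB]
    rw [← hAA', hAu, map_smul, hVu, map_smul, ← hAA', hAu, smul_smul, smul_smul]
    congr 1
    ring
  have hinv : ∀ ψ ∈ Module.End.eigenspace V ε, A ψ ∈ Module.End.eigenspace V ε := by
    intro ψ hψ
    rw [Module.End.mem_eigenspace_iff] at hψ ⊢
    rw [hAA']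
    have h2 := LinearMap.congr_fun hVA ψ
    simp only [LinearMap.comp_apply] at h2
    rw [h2, hψ, map_smul]
  -- membership of the chosen vectors
  have hmem : ∀ m : Fin 4, u (patt tr m) ∈ Module.End.eigenspace V ε := by
    intro m
    rw [Module.End.mem_eigenspace_iff, hVu, hεtr, nu_patt tr m]
  set v : Fin 4 → (Module.End.eigenspace V ε) := fun m => ⟨u (patt tr m), hmem m⟩ with hv
  have hon4 : Orthonormal ℂ v := by
    constructor
    · intro m
      have : ‖v m‖ = ‖(v m : Δ)‖ := (Submodule.norm_coe _).symm
      rw [this]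
      exact hunorm (patt tr m)
    · intro m m' hmm'
      have : ⟪v m, v m'⟫ = ⟪(v m : Δ), (v m' : Δ)⟫ := Submodule.coe_inner _ _ _
      rw [this]
      exact hortho _ _ (fun h => hmm' (patt_inj tr h))
  -- expansion of eigenvectors
  have hexp : ∀ ψ : Δ, V ψ = ε • ψ →
      ψ = ∑ m : Fin 4, B.repr ψ (patt tr m) • u (patt tr m) := by
    intro ψ hψ
    have hrezero : ∀ s, s ∉ Set.range (patt tr) → B.repr ψ s = 0 := by
      intro s hs
      have hνs := nu_not_mem tr s hs
      have hVexp : V ψ = ∑ t : Bool × Bool × Bool,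
          ((Complex.I * (sgn t.1 * sgn t.2.1 * sgn t.2.2)) * B.repr ψ t) • B t := by
        calc V ψ = V (∑ t : Bool × Bool × Bool, B.repr ψ t • B t) := by rw [B.sum_repr]
          _ = ∑ t : Bool × Bool × Bool, B.repr ψ t • V (B t) := by
              rw [map_sum]; simp only [map_smul]
          _ = _ := by
              refine Finset.sum_congr rfl fun t _ => ?_
              rw [hB, hVu, smul_smul, mul_comm]
      have hVexp2 : V ψ = ∑ t : Bool × Bool × Bool, (ε * B.repr ψ t) • B t := by
        rw [hψ]
        conv_lhs => rw [← B.sum_repr ψ]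
        rw [Finset.smul_sum]
        simp only [smul_smul]
      have h1 := B.repr_sum_self
        (fun t => (Complex.I * (sgn t.1 * sgn t.2.1 * sgn t.2.2)) * B.repr ψ t)
      have h2 := B.repr_sum_self (fun t => ε * B.repr ψ t)
      rw [← hVexp] at h1
      rw [← hVexp2] at h2
      have heqs := congrFun (h1.symm.trans h2) s
      rw [hνs, ← hεtr] at heqs
      have h3 : (2 * ε) * B.repr ψ s = 0 := by linear_combination -heqs
      exact (mul_eq_zero.mp h3).resolve_left (mul_ne_zero two_ne_zero hεne)
    conv_lhs => rw [← B.sum_repr ψ]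
    rw [show (∑ t : Bool × Bool × Bool, B.repr ψ t • B t)
        = ∑ t ∈ Finset.univ.image (patt tr), B.repr ψ t • B t from
      (Finset.sum_subset (Finset.subset_univ _) ?_).symm]
    · rw [Finset.sum_image (fun m _ m' _ h => patt_inj tr h)]
      exact Finset.sum_congr rfl fun m _ => by rw [hB]
    · intro t _ ht
      have hnr : t ∉ Set.range (patt tr) := by
        intro ⟨m, hm⟩
        exact ht (Finset.mem_image.mpr ⟨m, Finset.mem_univ m, hm⟩)
      rw [hrezero t hnr, zero_smul]
  have hspan : ⊤ ≤ Submodule.span ℂ (Set.range v) := by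
    intro x _
    have hx : (x : Δ) = ∑ m : Fin 4, B.repr (x : Δ) (patt tr m) • u (patt tr m) :=
      hexp x (Module.End.mem_eigenspace_iff.mp x.2)
    have hcoe : ∀ m : Fin 4, ((v m : Module.End.eigenspace V ε) : Δ) = u (patt tr m) :=
      fun m => rfl
    have hx2 : x = ∑ m : Fin 4, B.repr (x : Δ) (patt tr m) • v m := by
      apply Subtype.ext
      rw [Submodule.coe_sum]
      simp only [SetLike.val_smul, hcoe]
      exact hx
    rw [hx2]
    exact Submodule.sum_mem _ fun m _ =>
      Submodule.smul_mem _ _ (Submodule.subset_span ⟨m, rfl⟩)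
  refine ⟨hinv, ⟨OrthonormalBasis.mk hon4 hspan, ?_⟩⟩
  intro m
  rw [OrthonormalBasis.coe_mk]
  show A (u (patt tr m)) = _ • (u (patt tr m))
  rw [hAu, mu_patt tr m]
  congr 1
  fin_cases m <;> simp <;> push_cast <;> ring
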